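/- Let A ∈ ℝ^{n×n}, C ∈ ℝ^{p×n}, E ∈ ℝ^{n×r} with rank(E) = r. Suppose there exist matrices T₂, T₄ ∈ ℝ^{n×p} such that T₄·C·E = E and the matrix (I_n − T₄·C)·A − T₂·C is nilpotent. Then for every nonzero z ∈ ℂ the complex (n+p)×(n+r) block matrix [[z·I_n − A, −E],[C, 0]] has rank n + r. -/

import Mathlib

open Matrix

section aux

variable {n p r : ℕ}

/-- A real matrix of full column rank has injective complexified `mulVec`. -/
lemma aux_map_inj (E : Matrix (Fin n) (Fin r) ℝ) (hE : E.rank = r)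
    {u : Fin r → ℂ} (hu : (E.map (algebraMap ℝ ℂ)) *ᵥ u = 0) : u = 0 := by
  have hker : LinearMap.ker E.mulVecLin = ⊥ := by
    have h := E.mulVecLin.finrank_range_add_finrank_ker
    rw [Module.finrank_pi, Fintype.card_fin] at h
    have hr : Matrix.rank E = Module.finrank ℝ (LinearMap.range E.mulVecLin) := rfl
    rw [← hr, hE] at h
    have : Module.finrank ℝ (LinearMap.ker E.mulVecLin) = 0 := by omega
    exact Submodule.finrank_eq_zero.mp this
  have hinj : Function.Injective E.mulVecLin := LinearMap.ker_eq_bot.mp hker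
  have hre : E *ᵥ (fun j => (u j).re) = 0 := by
    funext i
    have h := congrFun hu i
    simp only [Matrix.mulVec, dotProduct, Matrix.map_apply, Pi.zero_apply] at h ⊢
    have h2 : (∑ j, (algebraMap ℝ ℂ) (E i j) * u j).re = (0 : ℂ).re := by rw [h]
    simpa [Complex.re_sum, Complex.mul_re] using h2
  have him : E *ᵥ (fun j => (u j).im) = 0 := by
    funext i
    have h := congrFun hu i
    simp only [Matrix.mulVec, dotProduct, Matrix.map_apply, Pi.zero_apply] at h ⊢
    have h2 : (∑ j, (algebraMap ℝ ℂ) (E i j) * u j).im = (0 : ℂ).im := by rw [h]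
    simpa [Complex.im_sum, Complex.mul_im] using h2
  have h1 : (fun j => (u j).re) = 0 := hinj (by simpa using hre)
  have h2 : (fun j => (u j).im) = 0 := hinj (by simpa using him)
  funext j
  apply Complex.ext
  · simpa using congrFun h1 j
  · simpa using congrFun h2 j

end aux

/-- If T₄·C·E = E and (I − T₄·C)·A − T₂·C is nilpotent, then the strong*
reconstructability rank condition holds for (A, E, C). -/
theorem stmt_14 {n p r : ℕ}
    (A : Matrix (Fin n) (Fin n) ℝ) (C : Matrix (Fin p) (Fin n) ℝ)
    (E : Matrix (Fin n) (Fin r) ℝ) (hE : E.rank = r)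
    (T₂ T₄ : Matrix (Fin n) (Fin p) ℝ)
    (h1 : T₄ * C * E = E)
    (h2 : IsNilpotent ((1 - T₄ * C) * A - T₂ * C)) :
    ∀ z : ℂ, z ≠ 0 →
      (Matrix.fromBlocks
          (z • (1 : Matrix (Fin n) (Fin n) ℂ) - A.map (algebraMap ℝ ℂ))
          (-(E.map (algebraMap ℝ ℂ)))
          (C.map (algebraMap ℝ ℂ)) 0).rank = n + r := by
  intro z hz
  set f : ℝ →+* ℂ := algebraMap ℝ ℂ with hf
  set A' := A.map f
  set C' := C.map f
  set E' := E.map f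
  set M := Matrix.fromBlocks (z • (1 : Matrix (Fin n) (Fin n) ℂ) - A') (-E') C' 0 with hM
  have hinj : Function.Injective M.mulVecLin := by
    rw [← LinearMap.ker_eq_bot, Matrix.ker_mulVecLin_eq_bot_iff]
    intro v hv
    set x : Fin n → ℂ := v ∘ Sum.inl
    set u : Fin r → ℂ := v ∘ Sum.inr
    have hv' : v = Sum.elim x u := by funext i; cases i <;> rfl
    rw [hv', Matrix.fromBlocks_mulVec] at hv
    have e1 : (z • (1 : Matrix (Fin n) (Fin n) ℂ) - A') *ᵥ x + (-E') *ᵥ u = 0 := by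
      funext i; exact congrFun hv (Sum.inl i)
    have e2 : C' *ᵥ x = 0 := by
      funext i; simpa using congrFun hv (Sum.inr i)
    rw [Matrix.sub_mulVec, Matrix.neg_mulVec, Matrix.smul_mulVec,
      Matrix.one_mulVec] at e1
    have e1' : z • x - A' *ᵥ x = E' *ᵥ u := by
      have h := add_neg_eq_zero.mp e1
      exact h
    have hA'x : A' *ᵥ x = z • x - E' *ᵥ u := by
      rw [← e1']; abel
    set N : Matrix (Fin n) (Fin n) ℝ := (1 - T₄ * C) * A - T₂ * C with hN
    set N' : Matrix (Fin n) (Fin n) ℂ := N.map f with hN'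
    have hN'nil : IsNilpotent N' := by
      have hq : N' = f.mapMatrix N := rfl
      rw [hq]; exact h2.map _
    have hmap1 : T₄.map f * C' * E' = E' := by
      calc T₄.map f * C' * E' = (T₄ * C * E).map f := by simp [Matrix.map_mul]; rfl
        _ = E' := by rw [h1]
    have hmap : N' = (1 - T₄.map f * C') * A' - T₂.map f * C' := by
      simp [hN', hN, Matrix.map_sub, Matrix.map_mul, Matrix.map_one]; rfl
    have c1 : (T₂.map f * C') *ᵥ x = 0 := by
      rw [← Matrix.mulVec_mulVec, e2, Matrix.mulVec_zero]
    have c2 : ((T₄.map f * C') * A') *ᵥ x = -(E' *ᵥ u) := by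
      rw [Matrix.mul_assoc, ← Matrix.mulVec_mulVec, ← Matrix.mulVec_mulVec, hA'x,
        Matrix.mulVec_sub, Matrix.mulVec_smul, e2, Matrix.mulVec_mulVec]
      rw [smul_zero, zero_sub, Matrix.mulVec_neg, Matrix.mulVec_mulVec,
        ← Matrix.mul_assoc, hmap1]
    have hstep : N' *ᵥ x = z • x := by
      rw [hmap, Matrix.sub_mulVec, Matrix.sub_mul, Matrix.one_mul, Matrix.sub_mulVec,
        c1, c2, hA'x]
      abel
    obtain ⟨k, hk⟩ := hN'nil
    have hxz : ∀ m : ℕ, (N' ^ m) *ᵥ x = z ^ m • x := by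
      intro m
      induction m with
      | zero => simp
      | succ m ih =>
        rw [pow_succ, ← Matrix.mulVec_mulVec, hstep, Matrix.mulVec_smul, ih,
          smul_smul, pow_succ, mul_comm]
    have hx0 : x = 0 := by
      have h0 : z ^ k • x = 0 := by rw [← hxz k, hk, Matrix.zero_mulVec]
      exact (smul_eq_zero.mp h0).resolve_left (pow_ne_zero _ hz)
    have hEu : E' *ᵥ u = 0 := by
      rw [← e1', hx0]; simp
    have hu0 : u = 0 := aux_map_inj E hE hEu
    rw [hv', hx0, hu0]
    funext i; cases i <;> rfl
  have hfin := LinearMap.finrank_range_of_inj hinj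
  rw [Matrix.rank, hfin, Module.finrank_pi]
  simp
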